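/- Let P be a property of Boolean functions on {0,1}^n, let ε > 0, and let T : ({0,1}^n × {0,1})^m × {0,1}^ℓ → {0,1} be a valid tester for P with proximity parameter ε using m samples: for every f ∈ P, the probability that T outputs 1 is at least 2/3, and for every f not in P_ε, the probability that T outputs 0 is at least 2/3, where the inputs are m i.i.d. uniform points x_i of {0,1}^n with labels f(x_i) and a uniform seed r ∈ {0,1}^ℓ. Let δ > 0 satisfy 4mδ < 1/3. Suppose f : {0,1}^n → {0,1}, f' ∈ P, and f̃ : {0,1}^n → [0,1] are such that for every one-way restriction R in R(T), both |E_{x uniform}[R(x)·(f(x) − f̃(x))]| ≤ δ and |E_{x uniform}[R(x)·(f'(x) − f̃(x))]| ≤ δ. Then f ∈ P_ε. -/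

import Mathlib

/-- Probability that the randomized tester `T` outputs `1` (Accept) on `m` i.i.d.
uniform samples from `{0,1}^n` labeled by `f`, with a uniform seed in `{0,1}^ℓ`. -/
noncomputable def acceptProb (n m l : ℕ)
    (T : (Fin m → (Fin n → Bool)) → (Fin m → Bool) → (Fin l → Bool) → Bool)
    (f : (Fin n → Bool) → Bool) : ℝ :=
  (∑ x : Fin m → (Fin n → Bool), ∑ r : Fin l → Bool,
      if T x (fun i => f (x i)) r then (1 : ℝ) else 0) / ((2 : ℝ) ^ (n * m) * 2 ^ l)

/-- Normalized Hamming distance between Boolean functions on `{0,1}^n`: the fraction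
of inputs on which they disagree. -/
noncomputable def fdist (n : ℕ) (f g : (Fin n → Bool) → Bool) : ℝ :=
  ((Finset.univ.filter fun x => f x ≠ g x).card : ℝ) / 2 ^ n

/-- `closeTo n P ε` is `P_ε`: the Boolean functions within distance `ε` of some member
of the property `P`. -/
def closeTo (n : ℕ) (P : Set ((Fin n → Bool) → Bool)) (ε : ℝ) :
    Set ((Fin n → Bool) → Bool) :=
  {f | ∃ g ∈ P, fdist n f g ≤ ε}

/-- `T` is a valid sample-based tester for `P` with proximity `ε`: it accepts every
`f ∈ P` with probability at least `2/3` and accepts every `f ∉ P_ε` with probability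
at most `1/3` (i.e. rejects with probability at least `2/3`). -/
def isValidTester (n m l : ℕ) (P : Set ((Fin n → Bool) → Bool)) (ε : ℝ)
    (T : (Fin m → (Fin n → Bool)) → (Fin m → Bool) → (Fin l → Bool) → Bool) : Prop :=
  (∀ f ∈ P, 2 / 3 ≤ acceptProb n m l T f) ∧
  (∀ f, f ∉ closeTo n P ε → acceptProb n m l T f ≤ 1 / 3)

open Finset


noncomputable def G9 (n m : ℕ) (f : (Fin n → Bool) → Bool) (ftil : (Fin n → Bool) → ℝ)
    (k : ℕ) : Fin m → (Fin n → Bool) → ℝ :=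
  fun j x => if (j:ℕ) < k then ftil x else if f x then 1 else 0

noncomputable def w9 (p : ℝ) (b : Bool) : ℝ := if b then p else 1 - p

lemma w9_mem {p : ℝ} (hp : p ∈ Set.Icc (0:ℝ) 1) (b : Bool) : w9 p b ∈ Set.Icc (0:ℝ) 1 := by
  cases b <;> simp [w9] <;> constructor <;> linarith [hp.1, hp.2]

lemma w9_diff (p q : ℝ) (b : Bool) : w9 p b - w9 q b = (if b then (1:ℝ) else -1) * (p - q) := by
  cases b <;> simp [w9] <;> try ring

lemma erase_prod9 {m : ℕ} (i : Fin m) (F : Fin m → ℝ) :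
    ∏ j ∈ univ.erase i, F j = ∏ j, (if j = i then (1:ℝ) else F j) := by
  rw [← Finset.mul_prod_erase univ (fun j => if j = i then (1:ℝ) else F j) (mem_univ i),
    if_pos rfl, one_mul]
  exact Finset.prod_congr rfl fun j hj => (if_neg (mem_erase.mp hj).1).symm

lemma sumy9 {m : ℕ} (q : Fin m → ℝ) (i : Fin m) :
    ∑ y : Fin m → Bool, ∏ j ∈ univ.erase i, w9 (q j) (y j) = 2 := by
  simp only [fun y : Fin m → Bool => erase_prod9 i (fun j => w9 (q j) (y j))]
  rw [← Fintype.piFinset_univ,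
    Finset.sum_prod_piFinset univ (fun j b => if j = i then (1:ℝ) else w9 (q j) b)]
  have h : ∀ j : Fin m, (∑ b : Bool, if j = i then (1:ℝ) else w9 (q j) b)
      = if j = i then (2:ℝ) else 1 := by
    intro j
    by_cases hj : j = i <;> simp [hj, w9] <;> try ring
  simp only [h]
  rw [Finset.prod_ite_eq' univ i (fun _ => (2:ℝ))]
  simp

lemma count9 {α X : Type*} [Fintype X] [DecidableEq α] [Fintype α] (i : α)
    (G : (α → X) → ℝ) :
    ∑ x : α → X, ∑ v : X, G (Function.update x i v)
      = (Fintype.card X : ℝ) * ∑ x : α → X, G x := by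
  classical
  have hinv : Function.Involutive
      (fun p : (α → X) × X => ((Function.update p.1 i p.2, p.1 i) : (α → X) × X)) := by
    intro p
    simp [Function.update_idem, Function.update_eq_self]
  have key : ∑ p : (α → X) × X, G (Function.update p.1 i p.2)
      = ∑ p : (α → X) × X, G p.1 :=
    Fintype.sum_equiv hinv.toPerm _ _ (fun p => rfl)
  calc ∑ x : α → X, ∑ v : X, G (Function.update x i v)
      = ∑ p : (α → X) × X, G (Function.update p.1 i p.2) := by
        rw [Fintype.sum_prod_type]
    _ = ∑ p : (α → X) × X, G p.1 := key
    _ = (Fintype.card X : ℝ) * ∑ x : α → X, G x := by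
        rw [Fintype.sum_prod_type]
        simp only [Finset.sum_const, card_univ, nsmul_eq_mul]
        rw [← Finset.mul_sum]

noncomputable def S9 (n m l : ℕ)
    (T : (Fin m → (Fin n → Bool)) → (Fin m → Bool) → (Fin l → Bool) → Bool)
    (g : Fin m → (Fin n → Bool) → ℝ) : ℝ :=
  ∑ x : Fin m → (Fin n → Bool), ∑ r : Fin l → Bool, ∑ y : Fin m → Bool,
    (∏ j, w9 (g j (x j)) (y j)) * (if T x y r then (1:ℝ) else 0)

lemma collapse9 (n m l : ℕ)
    (T : (Fin m → (Fin n → Bool)) → (Fin m → Bool) → (Fin l → Bool) → Bool)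
    (f : (Fin n → Bool) → Bool) :
    S9 n m l T (fun _ x => if f x then (1:ℝ) else 0)
      = ∑ x : Fin m → (Fin n → Bool), ∑ r : Fin l → Bool,
          (if T x (fun i => f (x i)) r then (1:ℝ) else 0) := by
  unfold S9
  refine Finset.sum_congr rfl fun x _ => Finset.sum_congr rfl fun r _ => ?_
  have h1 : ∀ y : Fin m → Bool,
      (∏ j, w9 (if f (x j) then (1:ℝ) else 0) (y j))
        = if y = (fun j => f (x j)) then (1:ℝ) else 0 := by
    intro y
    have h2 : ∀ j, w9 (if f (x j) then (1:ℝ) else 0) (y j)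
        = if y j = f (x j) then (1:ℝ) else 0 := by
      intro j
      cases hy : y j <;> cases hf : f (x j) <;> simp [w9, hy, hf]
    simp only [h2]
    rw [Fintype.prod_boole]
    congr 1
    simp [funext_iff, eq_comm]
  simp only [h1, ite_mul, one_mul, zero_mul]
  rw [Finset.sum_ite_eq' univ (fun j => f (x j))
    (fun y => if T x y r then (1:ℝ) else 0)]
  simp

lemma step9 (n m l : ℕ)
    (T : (Fin m → (Fin n → Bool)) → (Fin m → Bool) → (Fin l → Bool) → Bool)
    (i : Fin m) (g g' : Fin m → (Fin n → Bool) → ℝ) (δ : ℝ)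
    (hg : ∀ j, j ≠ i → ∀ x, g j x ∈ Set.Icc (0:ℝ) 1)
    (heq : ∀ j, j ≠ i → g j = g' j)
    (hd : ∀ (xs : Fin m → (Fin n → Bool)) (y : Fin m → Bool) (r : Fin l → Bool),
      |∑ v : Fin n → Bool, (if T (Function.update xs i v) y r then (1:ℝ) else 0)
          * (g i v - g' i v)| ≤ δ * 2 ^ n) :
    |S9 n m l T g - S9 n m l T g'| ≤ 2 * δ * (2 ^ (n*m) * 2 ^ l) := by
  classical
  set F : (Fin m → (Fin n → Bool)) → ℝ := fun x =>
    ∑ r : Fin l → Bool, ∑ y : Fin m → Bool,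
      ((∏ j ∈ univ.erase i, w9 (g j (x j)) (y j)) *
        ((if y i then (1:ℝ) else -1) * (g i (x i) - g' i (x i)))) *
          (if T x y r then (1:ℝ) else 0) with hF
  have hA : ∀ (x : Fin m → (Fin n → Bool)) (y : Fin m → Bool),
      (∏ j, w9 (g j (x j)) (y j)) - (∏ j, w9 (g' j (x j)) (y j))
        = (∏ j ∈ univ.erase i, w9 (g j (x j)) (y j)) *
            ((if y i then (1:ℝ) else -1) * (g i (x i) - g' i (x i))) := by
    intro x y
    rw [← Finset.mul_prod_erase univ (fun j => w9 (g j (x j)) (y j)) (mem_univ i),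
        ← Finset.mul_prod_erase univ (fun j => w9 (g' j (x j)) (y j)) (mem_univ i)]
    have hrw : ∏ j ∈ univ.erase i, w9 (g' j (x j)) (y j)
        = ∏ j ∈ univ.erase i, w9 (g j (x j)) (y j) :=
      Finset.prod_congr rfl fun j hj => by rw [heq j (mem_erase.mp hj).1]
    rw [hrw, ← sub_mul, w9_diff]
    ring
  have hSF : S9 n m l T g - S9 n m l T g' = ∑ x, F x := by
    unfold S9
    rw [← Finset.sum_sub_distrib]
    refine Finset.sum_congr rfl fun x _ => ?_
    rw [← Finset.sum_sub_distrib]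
    refine Finset.sum_congr rfl fun r _ => ?_
    rw [← Finset.sum_sub_distrib]
    refine Finset.sum_congr rfl fun y _ => ?_
    rw [← sub_mul, hA]
  have hswap : ∀ x : Fin m → (Fin n → Bool),
      ∑ v : Fin n → Bool, F (Function.update x i v)
        = ∑ r : Fin l → Bool, ∑ y : Fin m → Bool,
            ((∏ j ∈ univ.erase i, w9 (g j (x j)) (y j)) * (if y i then (1:ℝ) else -1)) *
              (∑ v : Fin n → Bool,
                (if T (Function.update x i v) y r then (1:ℝ) else 0) * (g i v - g' i v)) := by
    intro x
    have hFu : ∀ v : Fin n → Bool, F (Function.update x i v)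
        = ∑ r : Fin l → Bool, ∑ y : Fin m → Bool,
            ((∏ j ∈ univ.erase i, w9 (g j (x j)) (y j)) * (if y i then (1:ℝ) else -1)) *
              ((if T (Function.update x i v) y r then (1:ℝ) else 0) * (g i v - g' i v)) := by
      intro v
      simp only [hF]
      refine Finset.sum_congr rfl fun r _ => Finset.sum_congr rfl fun y _ => ?_
      have hprod : ∏ j ∈ univ.erase i, w9 (g j ((Function.update x i v) j)) (y j)
          = ∏ j ∈ univ.erase i, w9 (g j (x j)) (y j) :=
        Finset.prod_congr rfl fun j hj => by
          rw [Function.update_of_ne (mem_erase.mp hj).1]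
      rw [hprod, Function.update_self]
      ring
    simp only [hFu]
    rw [Finset.sum_comm]
    refine Finset.sum_congr rfl fun r _ => ?_
    rw [Finset.sum_comm]
    refine Finset.sum_congr rfl fun y _ => ?_
    rw [Finset.mul_sum]
  have hbx : ∀ x : Fin m → (Fin n → Bool),
      |∑ v : Fin n → Bool, F (Function.update x i v)| ≤ 2 ^ l * (2 * (δ * 2 ^ n)) := by
    intro x
    rw [hswap x]
    refine le_trans (Finset.abs_sum_le_sum_abs _ _) ?_
    have hinner : ∀ r : Fin l → Bool,
        |∑ y : Fin m → Bool,
            ((∏ j ∈ univ.erase i, w9 (g j (x j)) (y j)) * (if y i then (1:ℝ) else -1)) *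
              (∑ v : Fin n → Bool,
                (if T (Function.update x i v) y r then (1:ℝ) else 0) * (g i v - g' i v))|
          ≤ 2 * (δ * 2 ^ n) := by
      intro r
      refine le_trans (Finset.abs_sum_le_sum_abs _ _) ?_
      have hterm : ∀ y : Fin m → Bool,
          |((∏ j ∈ univ.erase i, w9 (g j (x j)) (y j)) * (if y i then (1:ℝ) else -1)) *
              (∑ v : Fin n → Bool,
                (if T (Function.update x i v) y r then (1:ℝ) else 0) * (g i v - g' i v))|
            ≤ (∏ j ∈ univ.erase i, w9 (g j (x j)) (y j)) * (δ * 2 ^ n) := by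
        intro y
        have hP : (0:ℝ) ≤ ∏ j ∈ univ.erase i, w9 (g j (x j)) (y j) :=
          Finset.prod_nonneg fun j hj =>
            (w9_mem (hg j (mem_erase.mp hj).1 (x j)) (y j)).1
        have hs : |(if y i then (1:ℝ) else -1)| = 1 := by
          cases hyi : y i <;> simp [hyi]
        rw [abs_mul, abs_mul, hs, mul_one, abs_of_nonneg hP]
        exact mul_le_mul_of_nonneg_left (hd x y r) hP
      refine le_trans (Finset.sum_le_sum fun y _ => hterm y) ?_
      rw [← Finset.sum_mul, sumy9 (fun j => g j (x j)) i]
    refine le_trans (Finset.sum_le_sum fun r _ => hinner r) ?_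
    rw [Finset.sum_const, card_univ]
    simp [nsmul_eq_mul]
  have hn : (0:ℝ) < 2 ^ n := by positivity
  have hsum := count9 i F
  have hcardX : ((Fintype.card (Fin n → Bool) : ℝ)) = 2 ^ n := by simp
  have habs : (2:ℝ) ^ n * |∑ x, F x| = |∑ x, ∑ v, F (Function.update x i v)| := by
    rw [hsum, hcardX, abs_mul, abs_of_nonneg (le_of_lt hn)]
  have hc : ((Fintype.card (Fin m → Fin n → Bool) : ℝ)) = 2 ^ (n * m) := by
    have h0 : Fintype.card (Fin m → Fin n → Bool) = 2 ^ (n * m) := by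
      rw [Fintype.card_fun]
      simp [← pow_mul]
    rw [h0]
    push_cast
    ring
  have h3 : |∑ x, ∑ v : Fin n → Bool, F (Function.update x i v)|
      ≤ (2:ℝ) ^ (n*m) * (2 ^ l * (2 * (δ * 2 ^ n))) := by
    refine le_trans (Finset.abs_sum_le_sum_abs _ _) ?_
    refine le_trans (Finset.sum_le_sum fun x _ => hbx x) ?_
    rw [Finset.sum_const, card_univ, nsmul_eq_mul, hc]
  rw [hSF]
  nlinarith [habs, h3, abs_nonneg (∑ x, F x)]

lemma hybrid9 (n m l : ℕ)
    (T : (Fin m → (Fin n → Bool)) → (Fin m → Bool) → (Fin l → Bool) → Bool)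
    (δ : ℝ) (f : (Fin n → Bool) → Bool)
    (ftil : (Fin n → Bool) → ℝ) (hftil : ∀ x, ftil x ∈ Set.Icc (0:ℝ) 1)
    (hd' : ∀ (i : Fin m) (xs : Fin m → (Fin n → Bool)) (y : Fin m → Bool)
        (r : Fin l → Bool),
      |∑ v : Fin n → Bool, (if T (Function.update xs i v) y r then (1:ℝ) else 0)
          * ((if f v then (1:ℝ) else 0) - ftil v)| ≤ δ * 2 ^ n) :
    |S9 n m l T (fun _ x => if f x then (1:ℝ) else 0) - S9 n m l T (fun _ => ftil)|
      ≤ m * (2 * δ * (2 ^ (n*m) * 2 ^ l)) := by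
  have hstep : ∀ k (hk : k < m),
      |S9 n m l T (G9 n m f ftil k) - S9 n m l T (G9 n m f ftil (k+1))|
        ≤ 2 * δ * (2 ^ (n*m) * 2 ^ l) := by
    intro k hk
    refine step9 n m l T ⟨k, hk⟩ _ _ δ ?_ ?_ ?_
    · intro j hj x
      simp only [G9]
      split
      · exact hftil x
      · split <;> simp
    · intro j hj
      funext x
      have hjk : (j:ℕ) ≠ k := by simpa using Fin.val_ne_of_ne hj
      have hiff : ((j:ℕ) < k) = ((j:ℕ) < k+1) := by
        apply propext; constructor <;> intro <;> omega
      simp only [G9, hiff]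
    · intro xs y r
      have h := hd' ⟨k, hk⟩ xs y r
      simpa [G9, Nat.lt_irrefl, Nat.lt_succ_self] using h
  have chain : ∀ k, k ≤ m →
      |S9 n m l T (G9 n m f ftil 0) - S9 n m l T (G9 n m f ftil k)|
        ≤ k * (2 * δ * (2 ^ (n*m) * 2 ^ l)) := by
    intro k
    induction k with
    | zero => intro _; simp
    | succ k ih =>
      intro hk
      have hk' : k < m := Nat.lt_of_succ_le hk
      calc |S9 n m l T (G9 n m f ftil 0) - S9 n m l T (G9 n m f ftil (k+1))|
          ≤ |S9 n m l T (G9 n m f ftil 0) - S9 n m l T (G9 n m f ftil k)|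
            + |S9 n m l T (G9 n m f ftil k) - S9 n m l T (G9 n m f ftil (k+1))| :=
            abs_sub_le _ _ _
        _ ≤ k * (2 * δ * (2 ^ (n*m) * 2 ^ l)) + 2 * δ * (2 ^ (n*m) * 2 ^ l) :=
            add_le_add (ih (le_of_lt hk')) (hstep k hk')
        _ = ((k+1 : ℕ) : ℝ) * (2 * δ * (2 ^ (n*m) * 2 ^ l)) := by push_cast; ring
  have h0 : G9 n m f ftil 0 = fun _ x => if f x then (1:ℝ) else 0 := by
    funext j x; simp [G9]
  have hm : G9 n m f ftil m = fun _ => ftil := by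
    funext j x; simp [G9, j.isLt]
  have := chain m le_rfl
  rw [h0, hm] at this
  exact this

lemma scale9 {c a δ : ℝ} (hc : 0 < c) (h : |1/c * a| ≤ δ) : |a| ≤ δ * c := by
  rw [abs_mul, abs_of_nonneg (by positivity : (0:ℝ) ≤ 1/c)] at h
  calc |a| = c * (1/c * |a|) := by field_simp
    _ ≤ c * δ := mul_le_mul_of_nonneg_left h (le_of_lt hc)
    _ = δ * c := mul_comm _ _


/-- If `T` is a valid tester for `P` with proximity `ε`, `4 m δ < 1/3`, `f' ∈ P`, and
`f̃` fools every one-way restriction of `T` against both `f` and `f'` up to error `δ`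
under the uniform distribution, then `f ∈ P_ε`. -/
theorem stmt_9 (n m l : ℕ) (P : Set ((Fin n → Bool) → Bool)) (ε : ℝ) (hε : 0 < ε)
    (T : (Fin m → (Fin n → Bool)) → (Fin m → Bool) → (Fin l → Bool) → Bool)
    (hT : isValidTester n m l P ε T)
    (δ : ℝ) (hδ : 0 < δ) (hδm : 4 * m * δ < 1 / 3)
    (f : (Fin n → Bool) → Bool) (f' : (Fin n → Bool) → Bool) (hf' : f' ∈ P)
    (ftil : (Fin n → Bool) → ℝ) (hftil : ∀ x, ftil x ∈ Set.Icc (0 : ℝ) 1)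
    (hregf : ∀ (i : Fin m) (xs : Fin m → (Fin n → Bool)) (y : Fin m → Bool)
        (r : Fin l → Bool),
      |∑ x : Fin n → Bool, ((1 : ℝ) / 2 ^ n) *
        ((if T (Function.update xs i x) y r then (1 : ℝ) else 0) *
          ((if f x then (1 : ℝ) else 0) - ftil x))| ≤ δ)
    (hregf' : ∀ (i : Fin m) (xs : Fin m → (Fin n → Bool)) (y : Fin m → Bool)
        (r : Fin l → Bool),
      |∑ x : Fin n → Bool, ((1 : ℝ) / 2 ^ n) *
        ((if T (Function.update xs i x) y r then (1 : ℝ) else 0) *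
          ((if f' x then (1 : ℝ) else 0) - ftil x))| ≤ δ) :
    f ∈ closeTo n P ε := by
  classical
  by_contra hnot
  have h1 : acceptProb n m l T f ≤ 1/3 := hT.2 f hnot
  have h2 : 2/3 ≤ acceptProb n m l T f' := hT.1 f' hf'
  have hNpos : (0:ℝ) < 2 ^ (n*m) * 2 ^ l := by positivity
  have hn : (0:ℝ) < 2 ^ n := by positivity
  have hd1 : ∀ (i : Fin m) (xs : Fin m → (Fin n → Bool)) (y : Fin m → Bool)
      (r : Fin l → Bool),
      |∑ v : Fin n → Bool, (if T (Function.update xs i v) y r then (1:ℝ) else 0)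
          * ((if f v then (1:ℝ) else 0) - ftil v)| ≤ δ * 2 ^ n := by
    intro i xs y r
    refine scale9 hn ?_
    rw [Finset.mul_sum]
    exact hregf i xs y r
  have hd2 : ∀ (i : Fin m) (xs : Fin m → (Fin n → Bool)) (y : Fin m → Bool)
      (r : Fin l → Bool),
      |∑ v : Fin n → Bool, (if T (Function.update xs i v) y r then (1:ℝ) else 0)
          * ((if f' v then (1:ℝ) else 0) - ftil v)| ≤ δ * 2 ^ n := by
    intro i xs y r
    refine scale9 hn ?_
    rw [Finset.mul_sum]
    exact hregf' i xs y r
  have hb1 := hybrid9 n m l T δ f ftil hftil hd1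
  have hb2 := hybrid9 n m l T δ f' ftil hftil hd2
  have e1 : S9 n m l T (fun _ x => if f x then (1:ℝ) else 0)
      = acceptProb n m l T f * (2 ^ (n*m) * 2 ^ l) := by
    rw [collapse9]
    unfold acceptProb
    rw [div_mul_cancel₀ _ (ne_of_gt hNpos)]
  have e2 : S9 n m l T (fun _ x => if f' x then (1:ℝ) else 0)
      = acceptProb n m l T f' * (2 ^ (n*m) * 2 ^ l) := by
    rw [collapse9]
    unfold acceptProb
    rw [div_mul_cancel₀ _ (ne_of_gt hNpos)]
  have key : |acceptProb n m l T f * (2 ^ (n*m) * 2 ^ l)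
      - acceptProb n m l T f' * (2 ^ (n*m) * 2 ^ l)|
      ≤ 4 * m * δ * (2 ^ (n*m) * 2 ^ l) := by
    rw [← e1, ← e2]
    calc |S9 n m l T (fun _ x => if f x then (1:ℝ) else 0)
          - S9 n m l T (fun _ x => if f' x then (1:ℝ) else 0)|
        ≤ |S9 n m l T (fun _ x => if f x then (1:ℝ) else 0) - S9 n m l T (fun _ => ftil)|
          + |S9 n m l T (fun _ => ftil) - S9 n m l T (fun _ x => if f' x then (1:ℝ) else 0)| :=
          abs_sub_le _ _ _
      _ ≤ m * (2 * δ * (2 ^ (n*m) * 2 ^ l)) + m * (2 * δ * (2 ^ (n*m) * 2 ^ l)) :=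
          add_le_add hb1 (by rw [abs_sub_comm]; exact hb2)
      _ = 4 * m * δ * (2 ^ (n*m) * 2 ^ l) := by ring
  have h3 : (acceptProb n m l T f' - acceptProb n m l T f) * (2 ^ (n*m) * 2 ^ l)
      ≤ 4 * m * δ * (2 ^ (n*m) * 2 ^ l) := by
    calc (acceptProb n m l T f' - acceptProb n m l T f) * (2 ^ (n*m) * 2 ^ l)
        = acceptProb n m l T f' * (2 ^ (n*m) * 2 ^ l)
          - acceptProb n m l T f * (2 ^ (n*m) * 2 ^ l) := by ring
      _ ≤ |acceptProb n m l T f' * (2 ^ (n*m) * 2 ^ l)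
          - acceptProb n m l T f * (2 ^ (n*m) * 2 ^ l)| := le_abs_self _
      _ = |acceptProb n m l T f * (2 ^ (n*m) * 2 ^ l)
          - acceptProb n m l T f' * (2 ^ (n*m) * 2 ^ l)| := abs_sub_comm _ _
      _ ≤ 4 * m * δ * (2 ^ (n*m) * 2 ^ l) := key
  have h4 : acceptProb n m l T f' - acceptProb n m l T f ≤ 4 * m * δ :=
    (mul_le_mul_iff_of_pos_right hNpos).mp h3
  linarith
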